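/- Let P be a finite N-free order with arc diagram A(P). Then the number of linear extensions of P satisfies e(P) ≥ e(A(P)) · ∏_{v ∈ V(A(P))} (o_v !), where e(A(P)) is the number of linear extensions of the order given by the transitive closure of A(P), and o_v is the out-degree of vertex v in A(P). -/

import Mathlib

/-- One-step reachability between vertices of a directed multigraph. -/
def vStep {V E : Type*} (src dst : E → V) (u v : V) : Prop :=
  ∃ e : E, src e = u ∧ dst e = v

/-- The line-digraph order on arcs: `x < y` iff some directed path has
first arc `x` and last arc `y`. -/
def lineLT {V E : Type*} (src dst : E → V) (x y : E) : Prop :=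
  Relation.TransGen (fun a b => dst a = src b) x y

/-- The number of linear extensions of a relation `r` on a finite type. -/
noncomputable def numLinExt (α : Type*) [Fintype α] (r : α → α → Prop) : ℕ :=
  Nat.card {σ : α ≃ Fin (Fintype.card α) // ∀ x y : α, r x y → σ x < σ y}

/-- Out-degree of a vertex in a directed multigraph. -/
noncomputable def outDeg {V E : Type*} (src : E → V) (v : V) : ℕ :=
  Nat.card {e : E // src e = v}

lemma equiv_eq_of_lt_iff {A : Type*} {k : ℕ} (σ σ' : A ≃ Fin k)
    (h : ∀ a b, σ a < σ b ↔ σ' a < σ' b) : σ = σ' := by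
  haveI : WellFoundedLT (Fin k) := ⟨Finite.wellFounded_of_trans_of_irrefl _⟩
  have hmono : StrictMono (fun i : Fin k => σ' (σ.symm i)) := by
    intro i j hij
    exact (h _ _).1 (by simpa using hij)
  have hid : (fun i : Fin k => σ' (σ.symm i)) = id :=
    (StrictMono.range_inj hmono strictMono_id).1 (by
      rw [Set.range_id]
      exact Set.range_eq_univ.2 (σ'.surjective.comp σ.symm.surjective))
  apply Equiv.ext
  intro a
  have h2 := congrFun hid (σ a)
  simpa using h2.symm

lemma keylt_of_lt {n a b c d : ℕ} (hb : b < n) (h : a < c) : a * n + b < c * n + d := by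
  have h2 : (a + 1) * n ≤ c * n := Nat.mul_le_mul_right n (by omega)
  rw [add_mul, one_mul] at h2; omega

lemma key_inj {n a b c d : ℕ} (hb : b < n) (hd : d < n) (h : a * n + b = c * n + d) :
    a = c ∧ b = d := by
  rcases lt_trichotomy a c with h' | h' | h'
  · exact absurd h (Nat.ne_of_lt (keylt_of_lt hb h'))
  · subst h'; exact ⟨rfl, by omega⟩
  · exact absurd h.symm (Nat.ne_of_lt (keylt_of_lt hd h'))

/-- if `P` (a finite order on `α`) is N-free, witnessed by its
arc diagram — a finite dag with a unique source and a unique sink whose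
line-digraph order is isomorphic to `P` via `φ` — then
`e(A(P)) · ∏_v o_v! ≤ e(P)`. -/
theorem stmt1 {α V E : Type*} [Fintype α] [PartialOrder α] [Fintype V] [Fintype E]
    (src dst : E → V)
    (hacyc : ∀ v : V, ¬ Relation.TransGen (vStep src dst) v v)
    (hsource : ∃! s : V, ∀ e : E, dst e ≠ s)
    (hsink : ∃! t : V, ∀ e : E, src e ≠ t)
    (φ : α ≃ E)
    (hφ : ∀ x y : α, x < y ↔ lineLT src dst (φ x) (φ y)) :
    numLinExt V (Relation.TransGen (vStep src dst)) *
        ∏ v : V, Nat.factorial (outDeg src v) ≤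
      numLinExt α (· < ·) := by
  classical
  obtain ⟨t, ht, htuniq⟩ := hsink
  haveI : Nonempty V := ⟨t⟩
  have hEn : Fintype.card E = Fintype.card α := (Fintype.card_congr φ).symm
  set n := Fintype.card α with hn
  set m := Fintype.card V with hm
  set R := Relation.TransGen (vStep src dst) with hR
  have hfib : ∀ v : V, Fintype.card {e : E // src e = v} = outDeg src v := by
    intro v; rw [outDeg, Nat.card_eq_fintype_card]
  have houtle : ∀ v : V, outDeg src v ≤ n := by
    intro v; rw [← hfib, ← hEn]; exact Fintype.card_subtype_le _
  set key : (V ≃ Fin m) → (∀ v : V, {e : E // src e = v} ≃ Fin (outDeg src v)) → E → ℕ :=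
    fun σ π e => (σ (src e)).val * n + ((π (src e)) ⟨e, rfl⟩ : ℕ) with hkey
  have hbnd : ∀ (π : ∀ v : V, {e : E // src e = v} ≃ Fin (outDeg src v)) (v : V)
      (x : {e : E // src e = v}), ((π v) x : ℕ) < n :=
    fun π v x => lt_of_lt_of_le (Fin.is_lt _) (houtle v)
  have hkeyval : ∀ σ π (v : V) (e : E) (he : src e = v),
      key σ π e = (σ v).val * n + ((π v) ⟨e, he⟩ : ℕ) := by
    intro σ π v e he; subst he; rfl
  have hstep : ∀ e f : E, lineLT src dst e f → R (src e) (src f) := by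
    intro e f h
    induction h with
    | single h1 => exact Relation.TransGen.single ⟨_, rfl, h1⟩
    | tail h1 h2 ih => exact Relation.TransGen.tail ih ⟨_, rfl, h2⟩
  have hkeymono : ∀ σ π, (∀ x y : V, R x y → σ x < σ y) →
      ∀ e f, lineLT src dst e f → key σ π e < key σ π f := by
    intro σ π hσ e f h
    exact keylt_of_lt (hbnd π _ _) (hσ _ _ (hstep e f h))
  have hkeyinj : ∀ σ π, Function.Injective (key σ π) := by
    intro σ π e f hef
    simp only [hkey] at hef
    obtain ⟨h1, h2⟩ := key_inj (hbnd π _ _) (hbnd π _ _) hef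
    have hsrc : src e = src f := σ.injective (Fin.ext h1)
    have h3 : key σ π e = (σ (src f)).val * n + ((π (src f)) ⟨e, hsrc⟩ : ℕ) :=
      hkeyval σ π (src f) e hsrc
    simp only [hkey] at h3
    have h4 : ((π (src f)) ⟨e, hsrc⟩ : ℕ) = ((π (src f)) ⟨f, rfl⟩ : ℕ) := by omega
    have h5 := (π (src f)).injective (Fin.ext h4)
    exact congrArg Subtype.val h5
  have hkeyfib : ∀ σ π (v : V) (e f : E) (he : src e = v) (hf : src f = v),
      (key σ π e < key σ π f ↔ (π v) ⟨e, he⟩ < (π v) ⟨f, hf⟩) := by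
    intro σ π v e f he hf
    rw [hkeyval σ π v e he, hkeyval σ π v f hf, Fin.lt_def]
    omega
  have hkeyvert : ∀ σ π (u v : V) (e f : E) (he : src e = u) (hf : src f = v), u ≠ v →
      (key σ π e < key σ π f ↔ σ u < σ v) := by
    intro σ π u v e f he hf huv
    rw [hkeyval σ π u e he, hkeyval σ π v f hf, Fin.lt_def]
    constructor
    · intro h
      by_contra h'
      push_neg at h'
      have hne : (σ v).val ≠ (σ u).val := fun hh => huv (σ.injective (Fin.ext hh.symm))
      have h'' : (σ v).val < (σ u).val := lt_of_le_of_ne h' hne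
      have := keylt_of_lt (hbnd π v ⟨f, hf⟩) h''
        (d := ((π u) ⟨e, he⟩ : ℕ))
      omega
    · intro h
      exact keylt_of_lt (hbnd π u ⟨e, he⟩) h
  -- rank equivalence from an injective key
  have hrank : ∀ g : E → ℕ, Function.Injective g →
      ∃ τE : E ≃ Fin n, ∀ e f, g e < g f ↔ τE e < τE f := by
    intro g ginj
    have hs : (Finset.image g Finset.univ).card = n := by
      rw [Finset.card_image_of_injective _ ginj, Finset.card_univ, hEn]
    set ι := (Finset.image g Finset.univ).orderIsoOfFin hs with hι
    set τ0 : E → Fin n :=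
      fun e => ι.symm ⟨g e, Finset.mem_image_of_mem g (Finset.mem_univ e)⟩ with hτ0def
    have hiff : ∀ e f, g e < g f ↔ τ0 e < τ0 f := by
      intro e f
      simp only [hτ0def]
      rw [OrderIso.lt_iff_lt]
      exact (Subtype.mk_lt_mk).symm
    have hinj : Function.Injective τ0 := by
      intro e f h
      have h1 : ¬ g e < g f := fun hh => absurd ((hiff e f).1 hh) (by rw [h]; exact lt_irrefl _)
      have h2 : ¬ g f < g e := fun hh => absurd ((hiff f e).1 hh) (by rw [h]; exact lt_irrefl _)
      exact ginj (by omega)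
    exact ⟨Equiv.ofBijective τ0 ((Fintype.bijective_iff_injective_and_card τ0).2 ⟨hinj, by simpa using hEn⟩),
      fun e f => hiff e f⟩
  choose mk hmk using hrank
  -- the injection
  set F : {σ : V ≃ Fin m // ∀ x y : V, R x y → σ x < σ y} ×
      (∀ v : V, {e : E // src e = v} ≃ Fin (outDeg src v)) →
      {τ : α ≃ Fin n // ∀ x y : α, x < y → τ x < τ y} :=
    fun d => ⟨φ.trans (mk (key d.1.1 d.2) (hkeyinj d.1.1 d.2)), by
      intro x y hxy
      exact (hmk _ _ _ _).1 (hkeymono d.1.1 d.2 d.1.2 _ _ ((hφ x y).1 hxy))⟩ with hF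
  have hexout : ∀ v : V, v ≠ t → ∃ e, src e = v := by
    intro v hv
    by_contra hno
    push_neg at hno
    exact hv (htuniq v hno)
  have hmax : ∀ (σ0 : V ≃ Fin m), (∀ x y : V, R x y → σ0 x < σ0 y) → ∀ v, σ0 v ≤ σ0 t := by
    intro σ0 hσ0 v
    obtain ⟨u, hu⟩ := Finite.exists_max (fun w => σ0 w)
    have hut : u = t := by
      by_contra hut
      obtain ⟨e, he⟩ := hexout u hut
      have hrel : R u (dst e) := Relation.TransGen.single ⟨e, he, rfl⟩
      exact absurd (hu (dst e)) (not_le_of_gt (hσ0 _ _ hrel))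
    exact hut ▸ hu v
  have hFinj : Function.Injective F := by
    rintro ⟨⟨σ, hσ⟩, π⟩ ⟨⟨σ', hσ'⟩, π'⟩ hFd
    simp only [hF, Subtype.mk.injEq] at hFd
    have heq : ∀ e : E, mk (key σ π) (hkeyinj σ π) e = mk (key σ' π') (hkeyinj σ' π') e := by
      intro e
      have := congrFun (congrArg (fun q : α ≃ Fin n => (q : α → Fin n)) (congrArg Subtype.val hFd)) (φ.symm e)
      simpa using this
    have hgg : ∀ e f, key σ π e < key σ π f ↔ key σ' π' e < key σ' π' f := by
      intro e f
      rw [hmk _ (hkeyinj σ π) e f, hmk _ (hkeyinj σ' π') e f, heq e, heq f]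
    have hσeq : σ = σ' := by
      apply equiv_eq_of_lt_iff
      intro u v
      rcases eq_or_ne u v with rfl | huv
      · simp
      rcases eq_or_ne v t with rfl | hv
      · exact iff_of_true
          (lt_of_le_of_ne (hmax σ hσ u) (fun h => huv (σ.injective h)))
          (lt_of_le_of_ne (hmax σ' hσ' u) (fun h => huv (σ'.injective h)))
      rcases eq_or_ne u t with rfl | hu
      · exact iff_of_false (not_lt.2 (hmax σ hσ v)) (not_lt.2 (hmax σ' hσ' v))
      · obtain ⟨e, he⟩ := hexout u hu
        obtain ⟨f, hf⟩ := hexout v hv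
        rw [← hkeyvert σ π u v e f he hf huv, ← hkeyvert σ' π' u v e f he hf huv]
        exact hgg e f
    have hπeq : π = π' := by
      funext v
      apply equiv_eq_of_lt_iff
      intro x y
      exact (hkeyfib σ π v x.1 y.1 x.2 y.2).symm.trans
        ((hgg x.1 y.1).trans (hkeyfib σ' π' v x.1 y.1 x.2 y.2))
    subst hσeq
    subst hπeq
    rfl
  haveI : Finite {τ : α ≃ Fin n // ∀ x y : α, x < y → τ x < τ y} := by
    infer_instance
  calc numLinExt V R * ∏ v : V, Nat.factorial (outDeg src v)
      = Nat.card {σ : V ≃ Fin m // ∀ x y : V, R x y → σ x < σ y} *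
          ∏ v : V, Nat.card ({e : E // src e = v} ≃ Fin (outDeg src v)) := by
        congr 1
        refine Finset.prod_congr rfl fun v _ => ?_
        rw [Nat.card_eq_fintype_card, Fintype.card_equiv (Fintype.equivFinOfCardEq (hfib v)),
          hfib v]
    _ = Nat.card ({σ : V ≃ Fin m // ∀ x y : V, R x y → σ x < σ y} ×
          (∀ v : V, {e : E // src e = v} ≃ Fin (outDeg src v))) := by
        rw [Nat.card_prod, Nat.card_pi]
    _ ≤ Nat.card {τ : α ≃ Fin n // ∀ x y : α, x < y → τ x < τ y} :=
        Nat.card_le_card_of_injective F hFinj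
    _ = numLinExt α (· < ·) := rfl
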